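/- Let Γ be a group, Γ₊ ⊆ Γ a sub-semigroup, and R, L subgroups of Γ with R ⊆ Γ₊ and L ⊆ Γ₊. Suppose that (M1) for all y ∈ Γ, x ∈ Γ₊ and z ∈ Γ the set R\((LyR)⁻¹z ∩ RxR) is finite; (M2) for all y ∈ Γ and x ∈ Γ₊ the set LyRxR is contained in the union of finitely many (L,R)-double cosets; and (H2) for all x, y ∈ Γ₊ the set RxRyR is contained in the union of finitely many (R,R)-double cosets. Then (H1) holds: for all x, y ∈ Γ₊ and z ∈ Γ₊ the set R\((RxR)⁻¹z ∩ RyR) is finite. -/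

import Mathlib

open scoped Pointwise

namespace Stmt3

variable {Γ : Type*} [Group Γ]

/-- The orbit set `R\S` of left multiplication by the subgroup `R` on a subset `S ⊆ Γ`. -/
def leftOrbits (R : Subgroup Γ) (S : Set Γ) : Set (Set Γ) :=
  {C | ∃ g ∈ S, C = (R : Set Γ) * {g}}

/-- `A⁻¹x = {a⁻¹ · x : a ∈ A}`. -/
def invMul (A : Set Γ) (x : Γ) : Set Γ := (fun a => a⁻¹ * x) '' A

end Stmt3

open Stmt3 in
/-- Simplified criterion: the fiber-finiteness condition (H1) of a finite Hecke datum
follows from (M1), (M2) and (H2). -/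
theorem stmt3 {Γ : Type*} [Group Γ] (Γp : Subsemigroup Γ) (R L : Subgroup Γ)
    (hR : (R : Set Γ) ⊆ (Γp : Set Γ)) (hL : (L : Set Γ) ⊆ (Γp : Set Γ))
    (M1 : ∀ y : Γ, ∀ x ∈ Γp, ∀ z : Γ,
      (leftOrbits R (invMul (DoubleCoset.doubleCoset y (L : Set Γ) (R : Set Γ)) z ∩
        DoubleCoset.doubleCoset x (R : Set Γ) (R : Set Γ))).Finite)
    (M2 : ∀ y : Γ, ∀ x ∈ Γp, ∃ D : Finset Γ,
      DoubleCoset.doubleCoset y (L : Set Γ) (R : Set Γ) * DoubleCoset.doubleCoset x (R : Set Γ) (R : Set Γ) ⊆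
        ⋃ d ∈ D, DoubleCoset.doubleCoset d (L : Set Γ) (R : Set Γ))
    (H2 : ∀ x ∈ Γp, ∀ y ∈ Γp, ∃ D : Finset Γ,
      DoubleCoset.doubleCoset x (R : Set Γ) (R : Set Γ) * DoubleCoset.doubleCoset y (R : Set Γ) (R : Set Γ) ⊆
        ⋃ d ∈ D, DoubleCoset.doubleCoset d (R : Set Γ) (R : Set Γ)) :
    ∀ x ∈ Γp, ∀ y ∈ Γp, ∀ z ∈ Γp,
      (leftOrbits R (invMul (DoubleCoset.doubleCoset x (R : Set Γ) (R : Set Γ)) z ∩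
        DoubleCoset.doubleCoset y (R : Set Γ) (R : Set Γ))).Finite := by

  intro x hx y hy z hz
  obtain ⟨D, hD⟩ := M2 1 x hx
  have key : invMul (DoubleCoset.doubleCoset x (R : Set Γ) (R : Set Γ)) z ∩
      DoubleCoset.doubleCoset y (R : Set Γ) (R : Set Γ) ⊆
      ⋃ d ∈ D, (invMul (DoubleCoset.doubleCoset d (L : Set Γ) (R : Set Γ)) z ∩
        DoubleCoset.doubleCoset y (R : Set Γ) (R : Set Γ)) := by
    rintro w ⟨⟨a, ha, rfl⟩, hw2⟩
    have hmem : a ∈ DoubleCoset.doubleCoset (1 : Γ) (L : Set Γ) (R : Set Γ) *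
        DoubleCoset.doubleCoset x (R : Set Γ) (R : Set Γ) := by
      obtain ⟨r1, hr1, r2, hr2, rfl⟩ := DoubleCoset.mem_doubleCoset.1 ha
      have h1 : r1 ∈ DoubleCoset.doubleCoset (1 : Γ) (L : Set Γ) (R : Set Γ) :=
        DoubleCoset.mem_doubleCoset.2 ⟨1, L.one_mem, r1, hr1, by group⟩
      have h2 : x * r2 ∈ DoubleCoset.doubleCoset x (R : Set Γ) (R : Set Γ) :=
        DoubleCoset.mem_doubleCoset.2 ⟨1, R.one_mem, r2, hr2, by group⟩
      have := Set.mul_mem_mul h1 h2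
      simpa [mul_assoc] using this
    have := hD hmem
    simp only [Set.mem_iUnion] at this ⊢
    obtain ⟨d, hd, had⟩ := this
    exact ⟨d, hd, ⟨a, had, rfl⟩, hw2⟩
  have hsub : leftOrbits R (invMul (DoubleCoset.doubleCoset x (R : Set Γ) (R : Set Γ)) z ∩
      DoubleCoset.doubleCoset y (R : Set Γ) (R : Set Γ)) ⊆
      ⋃ d ∈ D, leftOrbits R (invMul (DoubleCoset.doubleCoset d (L : Set Γ) (R : Set Γ)) z ∩
        DoubleCoset.doubleCoset y (R : Set Γ) (R : Set Γ)) := by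
    rintro C ⟨g, hg, rfl⟩
    have := key hg
    simp only [Set.mem_iUnion] at this ⊢
    obtain ⟨d, hd, hgd⟩ := this
    exact ⟨d, hd, g, hgd, rfl⟩
  exact Set.Finite.subset (Set.Finite.biUnion D.finite_toSet fun d _ => M1 d y hy z) hsub
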